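/- For the family of instances G_n consisting of a directed cycle v₁,...,v_{2n} where all edges have cost 1, exactly the edges (v_{2n}, v₁) and (v_n, v_{n+1}) are one-directional (reverse direction given by shortest-path closure), and all other edges symmetric: in the metric closure, the tour (v_n, v_{n−1}, ..., v₁, v_{2n}, v_{2n−1}, ..., v_{n+1}) has cost 6n − 4, while the optimal tour (v₁, v₂, ..., v_{2n}) has cost 2n; hence the ratio tends to 3. -/

import Mathlib

/-- Cost of traversing a list cyclically (wrapping around at the end). -/
def cycleCost {V : Type*} (c : V → V → ℝ) (l : List V) : ℝ :=
  ∑ i : Fin l.length, c (l.get i) (l.get ⟨((i : ℕ) + 1) % l.length, Nat.mod_lt _ i.pos⟩)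

/-- Cost of a path given as the list of its vertices. -/
def pathCost {V : Type*} (c : V → V → ℝ) : List V → ℝ
  | a :: b :: rest => c a b + pathCost c (b :: rest)
  | _ => 0

/-- `l` is a directed path from `u` to `v` along the edge relation `E`. -/
def IsPathOn {V : Type*} (E : V → V → Prop) (u v : V) (l : List V) : Prop :=
  2 ≤ l.length ∧ l.head? = some u ∧ l.getLast? = some v ∧ l.Chain' E

/-- The arc relation of the instance `G_n` (0-indexed: `vᵢ ↦ i - 1`): the directed
cycle `0 → 1 → ⋯ → 2n-1 → 0` (all arcs present), together with all reverse arcs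
except the reverses of `(v_{2n}, v₁) = (2n-1, 0)` and `(v_n, v_{n+1}) = (n-1, n)`. -/
def Erel (n : ℕ) (i j : Fin (2 * n)) : Prop :=
  (j : ℕ) = ((i : ℕ) + 1) % (2 * n) ∨
  ((i : ℕ) = ((j : ℕ) + 1) % (2 * n) ∧
    ¬((j : ℕ) = 2 * n - 1 ∧ (i : ℕ) = 0) ∧
    ¬((j : ℕ) = n - 1 ∧ (i : ℕ) = n))

/-- The metric closure of `G_n`: all arcs have cost 1, so the shortest-path
distance is the minimum number of arcs of a directed path. -/
noncomputable def dist18 (n : ℕ) (u v : Fin (2 * n)) : ℝ :=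
  sInf {x | ∃ l : List (Fin (2 * n)), IsPathOn (Erel n) u v l ∧ ((l.length : ℝ) - 1) = x}

/-- The vertex `v_{k+1}` of `G_n` (0-indexed). -/
def vtx (n : ℕ) (hn : 1 ≤ n) (k : ℕ) : Fin (2 * n) :=
  ⟨k % (2 * n), Nat.mod_lt _ (by omega)⟩

/-- The tour `(v_n, v_{n-1}, …, v₁, v_{2n}, v_{2n-1}, …, v_{n+1})`. -/
def tourBad (n : ℕ) (hn : 1 ≤ n) : List (Fin (2 * n)) :=
  ((List.range n).reverse.map (vtx n hn)) ++
    ((List.range n).reverse.map (fun k => vtx n hn (n + k)))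

/-- The tour `(v₁, v₂, …, v_{2n})`. -/
def tourOpt (n : ℕ) (hn : 1 ≤ n) : List (Fin (2 * n)) :=
  (List.range (2 * n)).map (vtx n hn)

section generic
variable {V : Type*} (c : V → V → ℝ)

lemma pathCost_chain_one :
    ∀ l : List V, l ≠ [] → l.Chain' (fun a b => c a b = 1) →
      pathCost c l = (l.length : ℝ) - 1
  | [], h, _ => absurd rfl h
  | [a], _, _ => by simp [pathCost]
  | a :: b :: l, _, hc => by
      obtain ⟨h1, h2⟩ := List.isChain_cons_cons.mp hc
      have := pathCost_chain_one (b :: l) (List.cons_ne_nil _ _) h2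
      simp only [pathCost, this, h1]
      push_cast [List.length_cons]
      ring

lemma pathCost_eq_range (d : V) :
    ∀ l : List V, pathCost c l =
      ∑ i ∈ Finset.range (l.length - 1), c (l.getD i d) (l.getD (i + 1) d)
  | [] => by simp [pathCost]
  | [a] => by simp [pathCost]
  | a :: b :: t => by
      have ih := pathCost_eq_range d (b :: t)
      simp only [pathCost, List.length_cons, Nat.add_sub_cancel] at *
      rw [Finset.sum_range_succ']
      simp only [List.getD_cons_succ, List.getD_cons_zero] at ih ⊢
      rw [ih]
      ring

lemma pathCost_append :
    ∀ (l1 l2 : List V) (h1 : l1 ≠ []) (h2 : l2 ≠ []),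
      pathCost c (l1 ++ l2) =
        pathCost c l1 + c (l1.getLast h1) (l2.head h2) + pathCost c l2
  | [], _, h1, _ => absurd rfl h1
  | [a], l2, _, h2 => by
      cases l2 with
      | nil => exact absurd rfl h2
      | cons b t => simp [pathCost]
  | a :: a' :: t, l2, _, h2 => by
      have ih := pathCost_append (a' :: t) l2 (List.cons_ne_nil _ _) h2
      simp only [List.cons_append, pathCost, List.append_eq] at *
      rw [ih, List.getLast_cons (List.cons_ne_nil _ _)]
      ring

lemma cycleCost_eq_range (d : V) (l : List V) :
    cycleCost c l =
      ∑ i ∈ Finset.range l.length, c (l.getD i d) (l.getD ((i + 1) % l.length) d) := by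
  rw [← Fin.sum_univ_eq_sum_range]
  unfold cycleCost
  refine Finset.sum_congr rfl (fun i _ => ?_)
  rw [List.getD_eq_getElem _ _ i.isLt, List.getD_eq_getElem _ _ (Nat.mod_lt _ i.pos)]
  rfl

lemma cycleCost_eq (l : List V) (hl : l ≠ []) :
    cycleCost c l = pathCost c l + c (l.getLast hl) (l.head hl) := by
  obtain ⟨m, hm⟩ : ∃ m, l.length = m + 1 := ⟨l.length - 1, by cases l <;> simp_all⟩
  have hlast : l.getD m (l.head hl) = l.getLast hl := by
    rw [List.getD_eq_getElem l _ (show m < l.length by omega), List.getLast_eq_getElem]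
    congr 1
    omega
  have hhead : l.getD 0 (l.head hl) = l.head hl := by
    rw [List.getD_eq_getElem l _ (show 0 < l.length by omega), List.head_eq_getElem]
  rw [cycleCost_eq_range c (l.head hl), pathCost_eq_range c (l.head hl), hm]
  rw [Finset.sum_range_succ, Nat.add_sub_cancel]
  congr 1
  · refine Finset.sum_congr rfl (fun i hi => ?_)
    rw [Finset.mem_range] at hi
    rw [Nat.mod_eq_of_lt (by omega)]
  · rw [Nat.mod_self, hhead, hlast]

lemma cycleCost_ge (l : List V) (h : ∀ u v : V, 1 ≤ c u v) :
    (l.length : ℝ) ≤ cycleCost c l := by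
  unfold cycleCost
  calc (l.length : ℝ) = ∑ _i : Fin l.length, (1:ℝ) := by simp
  _ ≤ _ := Finset.sum_le_sum (fun i _ => h _ _)

end generic


section graph
variable {n : ℕ} (hn : 1 ≤ n)
include hn

lemma vtx_val (k : ℕ) : (vtx n hn k : ℕ) = k % (2 * n) := rfl

lemma vtx_eq_of_lt {k : ℕ} (hk : k < 2 * n) : (vtx n hn k : ℕ) = k :=
  Nat.mod_eq_of_lt hk

/-- forward arc -/
lemma erel_fwd (k : ℕ) : Erel n (vtx n hn k) (vtx n hn (k + 1)) := by
  left
  rw [vtx_val, vtx_val, Nat.add_mod k 1, Nat.mod_eq_of_lt (show 1 < 2*n by omega)]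

/-- backward arc -/
lemma erel_back {j : ℕ} (hj : j + 1 < 2 * n) (hjn : j + 1 ≠ n) :
    Erel n (vtx n hn (j + 1)) (vtx n hn j) := by
  right
  rw [vtx_eq_of_lt hn hj, vtx_eq_of_lt hn (show j < 2*n by omega)]
  exact ⟨(Nat.mod_eq_of_lt hj).symm, by omega, by omega⟩

/-- forward path of m steps starting at a -/
def fpath (a m : ℕ) : List (Fin (2 * n)) :=
  (List.range (m + 1)).map (fun j => vtx n hn (a + j))

lemma fpath_isPath (a m : ℕ) (hm : 1 ≤ m) :
    IsPathOn (Erel n) (vtx n hn a) (vtx n hn (a + m)) (fpath hn a m) := by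
  refine ⟨by simp [fpath]; omega, ?_, ?_, ?_⟩
  · rw [List.head?_eq_getElem?]
    simp [fpath]
  · rw [List.getLast?_eq_getElem?]
    simp [fpath]
  · unfold fpath
    unfold List.Chain'; rw [List.isChain_map, List.isChain_range_succ]
    intro i hi
    exact erel_fwd hn (a + i)

lemma exists_path (u v : Fin (2 * n)) : ∃ l, IsPathOn (Erel n) u v l := by
  set m : ℕ := if (u : ℕ) < (v : ℕ) then (v : ℕ) - u else (v : ℕ) + 2 * n - u with hm
  have hu : u = vtx n hn u := by
    apply Fin.ext; rw [vtx_val, Nat.mod_eq_of_lt u.isLt]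
  have hv : v = vtx n hn ((u : ℕ) + m) := by
    apply Fin.ext; rw [vtx_val]
    have h2 := u.isLt
    have h3 := v.isLt
    split_ifs at hm with h
    · rw [hm, Nat.mod_eq_of_lt (by omega)]; omega
    · rw [hm, show (u : ℕ) + ((v:ℕ) + 2*n - u) = (v : ℕ) + 2*n by omega,
        Nat.add_mod_right, Nat.mod_eq_of_lt h3]
  refine ⟨fpath hn u m, ?_⟩
  have hp := fpath_isPath hn u m (by have := u.isLt; have := v.isLt; split_ifs at hm <;> omega)
  rwa [← hu, ← hv] at hp

lemma dist_mem_lb {u v : Fin (2 * n)} :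
    ∀ x ∈ {x | ∃ l : List (Fin (2 * n)), IsPathOn (Erel n) u v l ∧ ((l.length : ℝ) - 1) = x},
      (1:ℝ) ≤ x := by
  rintro x ⟨l, ⟨h2, _⟩, rfl⟩
  have : (2:ℝ) ≤ l.length := by exact_mod_cast h2
  linarith

lemma dist18_le {u v : Fin (2 * n)} {l : List (Fin (2 * n))}
    (h : IsPathOn (Erel n) u v l) : dist18 n u v ≤ (l.length : ℝ) - 1 :=
  csInf_le ⟨1, dist_mem_lb hn⟩ ⟨l, h, rfl⟩

lemma dist18_ge {u v : Fin (2 * n)} {C : ℝ}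
    (hC : ∀ l, IsPathOn (Erel n) u v l → C ≤ (l.length : ℝ) - 1) :
    C ≤ dist18 n u v :=
  le_csInf (let ⟨l, hl⟩ := exists_path hn u v; ⟨_, l, hl, rfl⟩)
    (by rintro x ⟨l, hl, rfl⟩; exact hC l hl)

lemma one_le_dist18 (u v : Fin (2 * n)) : 1 ≤ dist18 n u v := by
  refine dist18_ge hn (fun l hl => ?_)
  have : (2:ℝ) ≤ l.length := by exact_mod_cast hl.1
  linarith

lemma dist18_of_erel {u v : Fin (2 * n)} (h : Erel n u v) : dist18 n u v = 1 := by
  refine le_antisymm ?_ (one_le_dist18 hn u v)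
  have : IsPathOn (Erel n) u v [u, v] := by
    refine ⟨by simp, rfl, rfl, ?_⟩
    exact List.isChain_cons_cons.mpr ⟨h, List.isChain_singleton _⟩
  calc dist18 n u v ≤ ((([u,v] : List _).length : ℝ) - 1) := dist18_le hn this
  _ = 1 := by norm_num

/-- potential lower bound along chains -/
lemma chain_pot (g : Fin (2 * n) → ℕ)
    (hg : ∀ a b, Erel n a b → g b ≤ g a + 1) :
    ∀ (l : List (Fin (2 * n))) (h : l ≠ []), l.Chain' (Erel n) →
      g (l.getLast h) + 1 ≤ g (l.head h) + l.length
  | [], h, _ => absurd rfl h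
  | [a], _, _ => by simp
  | a :: b :: t, _, hc => by
      obtain ⟨h1, h2⟩ := List.isChain_cons_cons.mp hc
      have ih := chain_pot g hg (b :: t) (List.cons_ne_nil _ _) h2
      have := hg a b h1
      rw [List.getLast_cons (List.cons_ne_nil _ _)]
      simp only [List.head_cons, List.length_cons] at *
      omega

lemma path_pot {u v : Fin (2 * n)} {l : List (Fin (2 * n))} (g : Fin (2 * n) → ℕ)
    (hg : ∀ a b, Erel n a b → g b ≤ g a + 1)
    (h : IsPathOn (Erel n) u v l) : g v + 1 ≤ g u + l.length := by
  obtain ⟨h2, hh, hl, hc⟩ := h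
  have hne : l ≠ [] := by rintro rfl; simp at h2
  have h1 : l.head hne = u := by
    rw [List.head?_eq_head hne] at hh; exact Option.some_injective _ hh
  have h3 : l.getLast hne = v := by
    rw [List.getLast?_eq_getLast hne] at hl; exact Option.some_injective _ hl
  have := chain_pot hn g hg l hne hc
  rw [h1, h3] at this
  exact this

-- continuation, to be appended inside section graph of s2
lemma pot1 : ∀ a b : Fin (2 * n), Erel n a b → (b : ℕ) ≤ (a : ℕ) + 1 := by
  intro a b h
  rcases h with h | ⟨h, h1, h2⟩
  · rw [h]; exact Nat.mod_le _ _
  · by_cases hb : (b : ℕ) + 1 < 2 * n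
    · rw [Nat.mod_eq_of_lt hb] at h; omega
    · have hb' : (b : ℕ) = 2 * n - 1 := by have := b.isLt; omega
      rw [show (b:ℕ) + 1 = 2*n by have := b.isLt; omega, Nat.mod_self] at h
      exact absurd ⟨hb', h⟩ h1

def pot (i : Fin (2 * n)) : ℕ := if (i : ℕ) < n then (i : ℕ) + n else (i : ℕ) - n

lemma pot2 : ∀ a b : Fin (2 * n), Erel n a b → pot b ≤ pot a + 1 := by
  intro a b h
  have hb2 := b.isLt
  have ha2 := a.isLt
  rcases h with h | ⟨h, h1, h2⟩
  · by_cases ha : (a : ℕ) + 1 < 2 * n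
    · rw [Nat.mod_eq_of_lt ha] at h
      unfold pot; split_ifs <;> omega
    · rw [show (a:ℕ) + 1 = 2*n by omega, Nat.mod_self] at h
      unfold pot; split_ifs <;> omega
  · by_cases hb : (b : ℕ) + 1 < 2 * n
    · rw [Nat.mod_eq_of_lt hb] at h
      unfold pot; split_ifs <;> omega
    · rw [show (b:ℕ) + 1 = 2*n by omega, Nat.mod_self] at h
      exact absurd ⟨by omega, h⟩ h1

lemma dist_0_last : dist18 n (vtx n hn 0) (vtx n hn (2 * n - 1)) = 2 * (n : ℝ) - 1 := by
  have hpath := fpath_isPath hn 0 (2 * n - 1) (by omega)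
  rw [show 0 + (2 * n - 1) = 2 * n - 1 by omega] at hpath
  apply le_antisymm
  · have hle := dist18_le hn hpath
    have hlen : (fpath hn 0 (2 * n - 1)).length = 2 * n := by
      simp [fpath]; omega
    rw [hlen] at hle
    calc dist18 n _ _ ≤ ((2 * n : ℕ) : ℝ) - 1 := hle
    _ = 2 * (n : ℝ) - 1 := by push_cast; ring
  · refine dist18_ge hn (fun l hl => ?_)
    have h := path_pot hn (fun i : Fin (2*n) => (i : ℕ)) (pot1 hn) hl
    simp only [vtx_eq_of_lt hn (show 2*n-1 < 2*n by omega),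
      vtx_eq_of_lt hn (show 0 < 2*n by omega)] at h
    have h' : 2 * n ≤ l.length := by omega
    have : ((2*n : ℕ) : ℝ) ≤ (l.length : ℝ) := by exact_mod_cast h'
    push_cast at this
    linarith

lemma dist_n_pred : dist18 n (vtx n hn n) (vtx n hn (n - 1)) = 2 * (n : ℝ) - 1 := by
  have hpath := fpath_isPath hn n (2 * n - 1) (by omega)
  have hv : vtx n hn (n + (2 * n - 1)) = vtx n hn (n - 1) := by
    apply Fin.ext
    rw [vtx_val, vtx_val, show n + (2*n-1) = (n-1) + 2*n by omega, Nat.add_mod_right]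
  rw [hv] at hpath
  apply le_antisymm
  · have hle := dist18_le hn hpath
    have hlen : (fpath hn n (2 * n - 1)).length = 2 * n := by
      simp [fpath]; omega
    rw [hlen] at hle
    calc dist18 n _ _ ≤ ((2 * n : ℕ) : ℝ) - 1 := hle
    _ = 2 * (n : ℝ) - 1 := by push_cast; ring
  · refine dist18_ge hn (fun l hl => ?_)
    have h := path_pot hn pot (pot2 hn) hl
    have e1 : pot (vtx n hn (n-1)) = 2*n - 1 := by
      unfold pot
      rw [vtx_eq_of_lt hn (show n-1 < 2*n by omega)]
      split_ifs <;> omega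
    have e2 : pot (vtx n hn n) = 0 := by
      unfold pot
      rw [vtx_eq_of_lt hn (show n < 2*n by omega)]
      split_ifs <;> omega
    rw [e1, e2] at h
    have h' : 2 * n ≤ l.length := by omega
    have : ((2*n : ℕ) : ℝ) ≤ (l.length : ℝ) := by exact_mod_cast h'
    push_cast at this
    linarith

omit hn in
lemma chain'_range' (r : ℕ → ℕ → Prop) (k : ℕ) (h : ∀ i, i + 1 < k → r i (i + 1)) :
    (List.range k).Chain' r := by
  cases k with
  | zero => exact List.isChain_nil
  | succ m => unfold List.Chain'; rw [List.isChain_range_succ]; intro i hi; exact h i (by omega)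

omit hn in
lemma head_of_head? {α : Type*} {l : List α} (h : l ≠ []) {a : α}
    (ha : l.head? = some a) : l.head h = a := by
  rw [List.head?_eq_head h] at ha
  exact Option.some_inj.mp ha

omit hn in
lemma getLast_of_getLast? {α : Type*} {l : List α} (h : l ≠ []) {a : α}
    (ha : l.getLast? = some a) : l.getLast h = a := by
  rw [List.getLast?_eq_getLast h] at ha
  exact Option.some_inj.mp ha

lemma seg1_cost :
    pathCost (dist18 n) ((List.range n).reverse.map (vtx n hn)) = (n : ℝ) - 1 := by
  have hch : ((List.range n).reverse.map (vtx n hn)).Chain'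
      (fun a b => dist18 n a b = 1) := by
    unfold List.Chain'; rw [List.isChain_map, List.isChain_reverse]
    refine chain'_range' _ _ (fun i hi => ?_)
    exact dist18_of_erel hn (erel_back hn (by omega) (by omega))
  have := pathCost_chain_one (dist18 n) _ (by simp; omega) hch
  rw [this]; simp

lemma seg2_cost :
    pathCost (dist18 n) ((List.range n).reverse.map (fun k => vtx n hn (n + k)))
      = (n : ℝ) - 1 := by
  have hch : ((List.range n).reverse.map (fun k => vtx n hn (n + k))).Chain'
      (fun a b => dist18 n a b = 1) := by
    unfold List.Chain'; rw [List.isChain_map, List.isChain_reverse]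
    refine chain'_range' _ _ (fun i hi => ?_)
    have : Erel n (vtx n hn ((n + i) + 1)) (vtx n hn (n + i)) :=
      erel_back hn (by omega) (by omega)
    rw [show (n + i) + 1 = n + (i + 1) by omega] at this
    exact dist18_of_erel hn this
  have := pathCost_chain_one (dist18 n) _ (by simp; omega) hch
  rw [this]; simp

lemma vtx_add_two_n (k : ℕ) : vtx n hn (k + 2 * n) = vtx n hn k := by
  apply Fin.ext; rw [vtx_val, vtx_val, Nat.add_mod_right]

lemma tourOpt_cost : cycleCost (dist18 n) (tourOpt n hn) = 2 * (n : ℝ) := by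
  have hne : tourOpt n hn ≠ [] := by
    unfold tourOpt; simp; omega
  rw [cycleCost_eq _ _ hne]
  have hch : (tourOpt n hn).Chain' (fun a b => dist18 n a b = 1) := by
    unfold tourOpt
    unfold List.Chain'; rw [List.isChain_map]
    exact chain'_range' _ _ (fun i hi => dist18_of_erel hn (erel_fwd hn i))
  have hpc := pathCost_chain_one (dist18 n) _ hne hch
  have hlen : (tourOpt n hn).length = 2 * n := by unfold tourOpt; simp
  have hlast : (tourOpt n hn).getLast hne = vtx n hn (2 * n - 1) := by
    refine getLast_of_getLast? hne ?_
    unfold tourOpt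
    rw [List.getLast?_map, List.getLast?_range, if_neg (by omega)]
    rfl
  have hhead : (tourOpt n hn).head hne = vtx n hn 0 := by
    refine head_of_head? hne ?_
    unfold tourOpt
    rw [List.head?_map, List.head?_range, if_neg (by omega)]
    rfl
  have hd : dist18 n (vtx n hn (2 * n - 1)) (vtx n hn 0) = 1 := by
    have := erel_fwd hn (2 * n - 1)
    rw [show 2 * n - 1 + 1 = 0 + 2 * n by omega, vtx_add_two_n hn 0] at this
    exact dist18_of_erel hn this
  rw [hpc, hlast, hhead, hd, hlen]
  push_cast; ring

lemma tourBad_cost : cycleCost (dist18 n) (tourBad n hn) = 6 * (n : ℝ) - 4 := by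
  have h1 : ((List.range n).reverse.map (vtx n hn)) ≠ [] := by simp; omega
  have h2 : ((List.range n).reverse.map (fun k => vtx n hn (n + k))) ≠ [] := by
    simp; omega
  have hne : tourBad n hn ≠ [] := by
    unfold tourBad; simp; omega
  have qlast : (tourBad n hn).getLast? = some (vtx n hn n) := by
    unfold tourBad
    rw [List.getLast?_append, List.getLast?_map, List.getLast?_reverse,
      List.head?_range, if_neg (by omega)]
    simp
  have qhead : (tourBad n hn).head? = some (vtx n hn (n - 1)) := by
    unfold tourBad
    rw [List.head?_append_of_ne_nil _ h1, List.head?_map, List.head?_reverse,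
      List.getLast?_range, if_neg (by omega)]
    rfl
  have qlast1 : ((List.range n).reverse.map (vtx n hn)).getLast h1 = vtx n hn 0 := by
    refine getLast_of_getLast? h1 ?_
    rw [List.getLast?_map, List.getLast?_reverse, List.head?_range, if_neg (by omega)]
    rfl
  have qhead2 : ((List.range n).reverse.map (fun k => vtx n hn (n + k))).head h2
      = vtx n hn (2 * n - 1) := by
    refine head_of_head? h2 ?_
    rw [List.head?_map, List.head?_reverse, List.getLast?_range, if_neg (by omega)]
    simp only [Option.map_some]
    rw [show n + (n - 1) = 2 * n - 1 by omega]
  rw [cycleCost_eq _ _ hne, getLast_of_getLast? hne qlast,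
    head_of_head? hne qhead]
  rw [show tourBad n hn = ((List.range n).reverse.map (vtx n hn)) ++
      ((List.range n).reverse.map (fun k => vtx n hn (n + k))) from rfl]
  rw [pathCost_append _ _ _ h1 h2, qlast1, qhead2,
    seg1_cost hn, seg2_cost hn, dist_0_last hn, dist_n_pred hn]
  ring

end graph


/-- in the metric closure of `G_n` one has
`d(v₁, v_{2n}) = 2n − 1`, `d(v_{n+1}, v_n) = 2n − 1`, each of the two descending
segments costs `n − 1`, the tour `(v_n, …, v₁, v_{2n}, …, v_{n+1})` costs `6n − 4`,
the optimal tour `(v₁, …, v_{2n})` costs `2n` (and every tour costs at least `2n`);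
hence the ratio `(6n−4)/(2n)` tends to 3. -/
theorem stmt_18 :
    (∀ (n : ℕ) (hn : 1 ≤ n),
      dist18 n (vtx n hn 0) (vtx n hn (2 * n - 1)) = 2 * (n : ℝ) - 1 ∧
      dist18 n (vtx n hn n) (vtx n hn (n - 1)) = 2 * (n : ℝ) - 1 ∧
      pathCost (dist18 n) ((List.range n).reverse.map (vtx n hn)) = (n : ℝ) - 1 ∧
      pathCost (dist18 n) ((List.range n).reverse.map (fun k => vtx n hn (n + k)))
        = (n : ℝ) - 1 ∧
      cycleCost (dist18 n) (tourBad n hn) = 6 * (n : ℝ) - 4 ∧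
      cycleCost (dist18 n) (tourOpt n hn) = 2 * (n : ℝ) ∧
      (∀ l : List (Fin (2 * n)), l.Nodup → l.toFinset = Finset.univ →
        2 * (n : ℝ) ≤ cycleCost (dist18 n) l)) ∧
    Filter.Tendsto (fun n : ℕ => (6 * (n : ℝ) - 4) / (2 * (n : ℝ)))
      Filter.atTop (nhds 3) := by
  constructor
  · intro n hn
    refine ⟨dist_0_last hn, dist_n_pred hn, seg1_cost hn, seg2_cost hn,
      tourBad_cost hn, tourOpt_cost hn, ?_⟩
    intro l hnd huniv
    have hcard : l.length = 2 * n := by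
      have := List.toFinset_card_of_nodup hnd
      rw [huniv, Finset.card_univ, Fintype.card_fin] at this
      omega
    have hge := cycleCost_ge (dist18 n) l (fun u v => one_le_dist18 hn u v)
    rw [hcard] at hge
    calc 2 * (n : ℝ) = ((2 * n : ℕ) : ℝ) := by push_cast; ring
    _ ≤ _ := hge
  · have h0 : Filter.Tendsto (fun n : ℕ => 3 - 2 / (n : ℝ))
        Filter.atTop (nhds 3) := by
      have h := tendsto_const_div_atTop_nhds_zero_nat (2:ℝ)
      simpa using Filter.Tendsto.const_sub 3 h
    refine h0.congr' ?_
    filter_upwards [Filter.eventually_ge_atTop 1] with n hn1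
    have hne : (n : ℝ) ≠ 0 := Nat.cast_ne_zero.mpr (by omega)
    field_simp
    ring
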